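/- Let x = (x_0, x̄) ∈ ℝ × ℝ^d (not necessarily feasible) and let I = {i : ‖p̄_i − x̄‖ = p_{i0} − x_0}. Assume p_{i0} − x_0 > 0 for all i ∈ I, and that there are real coefficients α_i (i ∈ I) with Σ_{i∈I} α_i = 1 and x̄ = Σ_{i∈I} α_i p̄_i, and that D := Σ_{j∈I} α_j (p_{j0} − x_0) ≠ 0. Define y_i = (0, 0) for i ∉ I and, for i ∈ I, y_{i0} = α_i (p_{i0} − x_0)/D and ȳ_i = (y_{i0}/(p_{i0} − x_0))·(x̄ − p̄_i). Then Σ_{i=1}^m y_{i0} = 1, Σ_{i=1}^m ȳ_i = 0, and the complementary slackness conditions (p_{i0} − x_0)·y_{i0} + ⟨p̄_i − x̄, ȳ_i⟩ = 0 hold for every i = 1, …, m. -/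

import Mathlib

/-- Corollary: from an affine combination `x̄ = Σ_{i∈I} α_i p̄_i` over the active index set
`I`, the indicated dual solution satisfies the dual equality constraints and complementary
slackness. -/
theorem stmt_9 (d m : ℕ) (hd : 1 ≤ d) (hm : 1 ≤ m)
    (p : Fin m → ℝ × EuclideanSpace ℝ (Fin d))
    (x : ℝ × EuclideanSpace ℝ (Fin d))
    (I : Finset (Fin m))
    (hI : ∀ i, i ∈ I ↔ ‖(p i).2 - x.2‖ = (p i).1 - x.1)
    (hpos : ∀ i ∈ I, 0 < (p i).1 - x.1)
    (α : Fin m → ℝ)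
    (hα1 : ∑ i ∈ I, α i = 1)
    (hα2 : x.2 = ∑ i ∈ I, α i • (p i).2)
    (D : ℝ) (hD : D = ∑ j ∈ I, α j * ((p j).1 - x.1)) (hD0 : D ≠ 0)
    (y : Fin m → ℝ × EuclideanSpace ℝ (Fin d))
    (hy0 : ∀ i ∉ I, y i = 0)
    (hy1 : ∀ i ∈ I, (y i).1 = α i * ((p i).1 - x.1) / D)
    (hy2 : ∀ i ∈ I, (y i).2 = ((y i).1 / ((p i).1 - x.1)) • (x.2 - (p i).2)) :
    (∑ i, (y i).1) = 1 ∧ (∑ i, (y i).2) = 0 ∧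
      ∀ i, ((p i).1 - x.1) * (y i).1 + (inner ℝ ((p i).2 - x.2) (y i).2 : ℝ) = 0 := by
  have hsum1 : (∑ i, (y i).1) = 1 := by
    rw [← Finset.sum_subset (Finset.subset_univ I)
      (by intro i _ hi; rw [hy0 i hi]; rfl)]
    rw [Finset.sum_congr rfl (fun i hi => hy1 i hi), ← Finset.sum_div, ← hD,
      div_self hD0]
  have hsum2 : (∑ i, (y i).2) = 0 := by
    rw [← Finset.sum_subset (Finset.subset_univ I)
      (by intro i _ hi; rw [hy0 i hi]; rfl)]
    have : ∀ i ∈ I, (y i).2 = (α i / D) • (x.2 - (p i).2) := by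
      intro i hi
      have hne := ne_of_gt (hpos i hi)
      rw [hy2 i hi, hy1 i hi]
      congr 1
      field_simp
    rw [Finset.sum_congr rfl this]
    have : ∑ i ∈ I, (α i / D) • (x.2 - (p i).2)
        = (1/D) • (∑ i ∈ I, (α i • x.2 - α i • (p i).2)) := by
      rw [Finset.smul_sum]
      refine Finset.sum_congr rfl fun i hi => ?_
      rw [smul_sub, smul_sub, ← smul_assoc, ← smul_assoc]
      congr 2 <;> simp [smul_eq_mul] <;> ring
    rw [this, Finset.sum_sub_distrib, ← Finset.sum_smul, hα1, one_smul, ← hα2,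
      sub_self, smul_zero]
  refine ⟨hsum1, hsum2, fun i => ?_⟩
  by_cases hi : i ∈ I
  · rw [hy2 i hi]
    have hnorm : ‖(p i).2 - x.2‖ = (p i).1 - x.1 := (hI i).1 hi
    have hne : (p i).1 - x.1 ≠ 0 := ne_of_gt (hpos i hi)
    have : (inner ℝ ((p i).2 - x.2) (((y i).1 / ((p i).1 - x.1)) • (x.2 - (p i).2)) : ℝ)
        = ((y i).1 / ((p i).1 - x.1)) * (- ‖(p i).2 - x.2‖^2) := by
      rw [inner_smul_right]
      congr 1
      rw [show x.2 - (p i).2 = -((p i).2 - x.2) from (neg_sub _ _).symm, inner_neg_right,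
        real_inner_self_eq_norm_sq]
    rw [this, hnorm]
    field_simp
    ring
  · rw [hy0 i hi]
    simp
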